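/- Let I be a nonempty finite index set, let x̄ ∈ ℝⁿ, and for each i ∈ I let f_i : ℝⁿ → ℝ be locally Lipschitz around x̄. Define f := max_{i ∈ I} f_i and the active index set I_max(x̄) := {i ∈ I : f_i(x̄) = f(x̄)}. Then for every d ∈ ℝⁿ one has f'(x̄; d) = max_{i ∈ I_max(x̄)} f_i'(x̄; d), where f'(x; d) denotes the upper directional derivative. -/

import Mathlib

open Filter

/-- The upper directional derivative of `f` at `x` in direction `d`:
`f'(x; d) := limsup_{t → 0⁺} (f(x + t d) − f(x))/t`. -/
noncomputable def upperDirDeriv {n : ℕ} (f : EuclideanSpace ℝ (Fin n) → ℝ)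
    (x d : EuclideanSpace ℝ (Fin n)) : ℝ :=
  Filter.limsup (fun t : ℝ => (f (x + t • d) - f x) / t) (nhdsWithin 0 (Set.Ioi 0))

/-- for a finite family of functions locally Lipschitz around `xb`,
the upper directional derivative of the pointwise maximum `F = max_i f_i` equals the
maximum of the upper directional derivatives of the active functions
`I_max(xb) = {i : f_i(xb) = F(xb)}`. -/
theorem maxRule_upperDirDeriv_eq {n : ℕ} {I : Type*} [Fintype I] [Nonempty I]
    (f : I → EuclideanSpace ℝ (Fin n) → ℝ) (xb : EuclideanSpace ℝ (Fin n))
    (hf : ∀ i : I, ∃ K : NNReal, ∃ U ∈ nhds xb, LipschitzOnWith K (f i) U)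
    (F : EuclideanSpace ℝ (Fin n) → ℝ)
    (hF : ∀ x, F x = Finset.univ.sup' Finset.univ_nonempty (fun i => f i x))
    (d : EuclideanSpace ℝ (Fin n)) :
    IsGreatest {y : ℝ | ∃ i : I, f i xb = F xb ∧ y = upperDirDeriv (f i) xb d}
      (upperDirDeriv F xb d) := by
  classical
  set l : Filter ℝ := nhdsWithin 0 (Set.Ioi 0) with hl
  have hlne : l.NeBot := by rw [hl]; infer_instance
  set q : I → ℝ → ℝ := fun i t => (f i (xb + t • d) - f i xb) / t with hq
  set A : Finset I := Finset.univ.filter (fun i => f i xb = F xb) with hA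
  -- the path t ↦ xb + t • d
  have hpath : Continuous fun t : ℝ => xb + t • d := by continuity
  have hpath0 : (fun t : ℝ => xb + t • d) 0 = xb := by simp
  -- continuity of each f i along the path
  have htend : ∀ i : I, Filter.Tendsto (fun t : ℝ => f i (xb + t • d)) (nhds 0)
      (nhds (f i xb)) := by
    intro i
    obtain ⟨K, U, hU, lip⟩ := hf i
    have hci : ContinuousAt (f i) ((fun t : ℝ => xb + t • d) 0) := by
      rw [hpath0]; exact lip.continuousOn.continuousAt hU
    have := Filter.Tendsto.comp hci (hpath.continuousAt (x := (0:ℝ)))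
    simpa [ContinuousAt, hpath0, Function.comp_def] using this
  -- boundedness of the difference quotients
  have hbdd : ∀ i : I, l.IsBoundedUnder (· ≤ ·) (q i) ∧ l.IsBoundedUnder (· ≥ ·) (q i) := by
    intro i
    obtain ⟨K, U, hU, lip⟩ := hf i
    have hxbU : xb ∈ U := mem_of_mem_nhds hU
    have hmem : ∀ᶠ t in nhds (0:ℝ), xb + t • d ∈ U := by
      have h1 : Filter.Tendsto (fun t : ℝ => xb + t • d) (nhds 0) (nhds xb) := by
        simpa [ContinuousAt, hpath0] using hpath.continuousAt (x := (0:ℝ))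
      exact h1.eventually_mem hU
    have hev : ∀ᶠ t in l, |q i t| ≤ (K : ℝ) * ‖d‖ := by
      filter_upwards [hmem.filter_mono nhdsWithin_le_nhds, self_mem_nhdsWithin] with t htU htpos
      have htpos' : (0:ℝ) < t := htpos
      have hd : dist (xb + t • d) xb = t * ‖d‖ := by
        rw [dist_eq_norm, add_sub_cancel_left, norm_smul, Real.norm_eq_abs,
          abs_of_pos htpos']
      have h1 : |f i (xb + t • d) - f i xb| ≤ (K : ℝ) * (t * ‖d‖) := by
        have := lip.dist_le_mul _ htU _ hxbU
        rw [Real.dist_eq, hd] at this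
        exact this
      have : |q i t| = |f i (xb + t • d) - f i xb| / t := by
        rw [hq]; simp [abs_div, abs_of_pos htpos']
      rw [this, div_le_iff₀ htpos']
      calc |f i (xb + t • d) - f i xb| ≤ (K : ℝ) * (t * ‖d‖) := h1
        _ = (K : ℝ) * ‖d‖ * t := by ring
    constructor
    · exact ⟨(K : ℝ) * ‖d‖, by
        simpa [eventually_map] using hev.mono fun t h => (abs_le.1 h).2⟩
    · exact ⟨-((K : ℝ) * ‖d‖), by
        simpa [eventually_map] using hev.mono fun t h => (abs_le.1 h).1⟩
  -- the active set is nonempty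
  have hAne : A.Nonempty := by
    obtain ⟨i, hiu, hi⟩ := Finset.exists_mem_eq_sup' Finset.univ_nonempty (fun i => f i xb)
    refine ⟨i, Finset.mem_filter.2 ⟨Finset.mem_univ i, ?_⟩⟩
    rw [hF]; exact hi.symm
  obtain ⟨i0, hi0A⟩ := hAne
  have hi0 : f i0 xb = F xb := (Finset.mem_filter.1 hi0A).2
  -- key: eventually the quotient of F equals the sup over A of the quotients
  have hkey : ∀ᶠ t in l, (F (xb + t • d) - F xb) / t = A.sup' ⟨i0, hi0A⟩ (fun i => q i t) := by
    have hstrict : ∀ᶠ t in nhds (0:ℝ), ∀ j ∈ (Finset.univ \ A),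
        f j (xb + t • d) < f i0 (xb + t • d) := by
      rw [eventually_all_finset]
      intro j hj
      have hjA : j ∉ A := (Finset.mem_sdiff.1 hj).2
      have hjle : f j xb ≤ F xb := by
        rw [hF]; exact Finset.le_sup' (fun i => f i xb) (Finset.mem_univ j)
      have hjne : f j xb ≠ F xb := fun h =>
        hjA (Finset.mem_filter.2 ⟨Finset.mem_univ j, h⟩)
      have hjlt : f j xb < f i0 xb := by
        rw [hi0]; exact lt_of_le_of_ne hjle hjne
      exact (htend j).eventually_lt (htend i0) hjlt
    filter_upwards [hstrict.filter_mono nhdsWithin_le_nhds, self_mem_nhdsWithin]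
      with t hst htpos
    have htpos' : (0:ℝ) < t := htpos
    have hFt : F (xb + t • d) = A.sup' ⟨i0, hi0A⟩ (fun i => f i (xb + t • d)) := by
      rw [hF]
      apply le_antisymm
      · apply Finset.sup'_le
        intro i _
        by_cases hiA : i ∈ A
        · exact Finset.le_sup' (fun i => f i (xb + t • d)) hiA
        · exact le_of_lt (lt_of_lt_of_le
            (hst i (Finset.mem_sdiff.2 ⟨Finset.mem_univ i, hiA⟩))
            (Finset.le_sup' (fun i => f i (xb + t • d)) hi0A))
      · apply Finset.sup'_le
        intro i _
        exact Finset.le_sup' (fun i => f i (xb + t • d)) (Finset.mem_univ i)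
    have hmono : Monotone (fun x : ℝ => (x - F xb) / t) := fun a b hab => by
      dsimp only; gcongr
    rw [hFt, Finset.comp_sup'_eq_sup'_comp ⟨i0, hi0A⟩ (fun x : ℝ => (x - F xb) / t)
      (fun x y => hmono.map_max)]
    apply Finset.sup'_congr _ rfl
    intro i hi
    have : f i xb = F xb := (Finset.mem_filter.1 hi).2
    simp [Function.comp, hq, this]
  -- main identity
  have hmain : upperDirDeriv F xb d =
      A.sup' ⟨i0, hi0A⟩ (fun i => upperDirDeriv (f i) xb d) := by
    unfold upperDirDeriv
    rw [limsup_congr hkey]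
    exact limsup_finset_sup' ⟨i0, hi0A⟩
      (fun i _ => ((hbdd i).2).isCoboundedUnder_le)
      (fun i _ => (hbdd i).1)
  constructor
  · obtain ⟨i, hiA, hival⟩ :=
      Finset.exists_mem_eq_sup' ⟨i0, hi0A⟩ (fun i => upperDirDeriv (f i) xb d)
    exact ⟨i, (Finset.mem_filter.1 hiA).2, by rw [hmain, hival]⟩
  · rintro y ⟨i, hi, rfl⟩
    rw [hmain]
    exact Finset.le_sup' (fun i => upperDirDeriv (f i) xb d) (Finset.mem_filter.2 ⟨Finset.mem_univ i, hi⟩)
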